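/- Let p be a prime number and let ℋ_p be the family of all subgroups of G = (ℤ/pℤ)^ℕ that are uniformly controllable in G but not strongly controllable in G. Then ℋ_p has cardinality 2^𝔠, where 𝔠 is the cardinality of the continuum. -/

import Mathlib

/-- Projection of an element of the direct product `ℕ → M` to the coordinates
in `J`. -/
def proj {M : Type*} (J : Set ℕ) (g : ℕ → M) : J → M :=
  fun j => g j

/-- A subgroup `H` of the direct product `G = M^ℕ` is *uniformly controllable*
in `G` if for every finite `J ⊆ ℕ` there is a finite `K ⊆ ℕ` with
`p_J(H) = p_J(H ∩ ⊕_{n ∈ K} M)`. -/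
def UniformlyControllable {M : Type*} [AddCommGroup M]
    (H : AddSubgroup (ℕ → M)) : Prop :=
  ∀ J : Set ℕ, J.Finite → ∃ K : Set ℕ, K.Finite ∧
    proj J '' (H : Set (ℕ → M)) =
      proj J '' ((H : Set (ℕ → M)) ∩ {g | ∀ n ∉ K, g n = 0})

/-- A subgroup `H` of `G = M^ℕ` is *k-controllable* in `G` if for all
`h, h' ∈ H` and every `n ∈ ℕ` there is `g ∈ H` agreeing with `h` on all
`i ≤ n` and with `h'` on all `i ≥ n + k`. -/
def KControllable {M : Type*} [AddCommGroup M] (k : ℕ)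
    (H : AddSubgroup (ℕ → M)) : Prop :=
  ∀ h ∈ H, ∀ h' ∈ H, ∀ n : ℕ, ∃ g ∈ H,
    (∀ i ≤ n, g i = h i) ∧ (∀ i, n + k ≤ i → g i = h' i)

/-- A subgroup `H` of `G = M^ℕ` is *strongly controllable* in `G` if it is
`k`-controllable for some `k ∈ ℕ`. -/
def StronglyControllable {M : Type*} [AddCommGroup M]
    (H : AddSubgroup (ℕ → M)) : Prop :=
  ∃ k : ℕ, KControllable k H

noncomputable section

namespace UCAux

open Classical

/-! ### Coordinate bookkeeping -/

/-- first point of the `r`-th "pair block" (an even number). -/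
def uu (r : ℕ) : ℕ := 4 ^ (r + 1)

/-- second point of the `r`-th "pair block" (an even number). -/
def vv (r : ℕ) : ℕ := 2 * 4 ^ (r + 1)

/-- odd coordinates coding the prefixes of a binary sequence `s`. -/
def code (s : ℕ → Bool) (n : ℕ) : ℕ :=
  2 * Nat.pair n (Encodable.encode (List.ofFn fun i : Fin n => s i)) + 1

lemma even_uu (r : ℕ) : Even (uu r) := ⟨2 * 4 ^ r, by simp [uu, pow_succ]; ring⟩

lemma even_vv (r : ℕ) : Even (vv r) := ⟨4 ^ (r + 1), by simp [vv]; ring⟩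

lemma odd_code (s : ℕ → Bool) (n : ℕ) : Odd (code s n) := ⟨_, rfl⟩

lemma not_odd_uu (r : ℕ) : ¬ Odd (uu r) := Nat.not_odd_iff_even.mpr (even_uu r)

lemma not_odd_vv (r : ℕ) : ¬ Odd (vv r) := Nat.not_odd_iff_even.mpr (even_vv r)

lemma uu_ne_code (r : ℕ) (s : ℕ → Bool) (n : ℕ) : uu r ≠ code s n := by
  intro h
  exact not_odd_uu r (h ▸ odd_code s n)

lemma vv_ne_code (r : ℕ) (s : ℕ → Bool) (n : ℕ) : vv r ≠ code s n := by
  intro h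
  exact not_odd_vv r (h ▸ odd_code s n)

lemma uu_inj : Function.Injective uu := by
  intro r s h
  have := Nat.pow_right_injective (by norm_num : 2 ≤ 4) h
  omega

lemma vv_inj : Function.Injective vv := by
  intro r s h
  have h' : 4 ^ (r + 1) = 4 ^ (s + 1) := by
    simpa [vv] using h
  have := Nat.pow_right_injective (by norm_num : 2 ≤ 4) h'
  omega

lemma uu_ne_vv (r s : ℕ) : uu r ≠ vv s := by
  intro h
  have h4 : (4 : ℕ) = 2 ^ 2 := by norm_num
  have h1 : (2 : ℕ) ^ (2 * (r + 1)) = 2 ^ (2 * (s + 1) + 1) := by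
    calc (2 : ℕ) ^ (2 * (r + 1)) = 4 ^ (r + 1) := by rw [h4, ← pow_mul]
    _ = 2 * 4 ^ (s + 1) := h
    _ = 2 ^ (2 * (s + 1) + 1) := by rw [h4, ← pow_mul, pow_succ, mul_comm]
  have := Nat.pow_right_injective (le_refl 2) h1
  omega

lemma uu_add_lt_vv (r : ℕ) : uu r + r < vv r := by
  have h1 : r < 4 ^ r := Nat.lt_pow_self (by norm_num : 1 < 4)
  have h2 : (4 : ℕ) ^ r ≤ 4 ^ (r + 1) := Nat.pow_le_pow_right (by norm_num) (Nat.le_succ r)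
  have : vv r = uu r + 4 ^ (r + 1) := by simp [uu, vv, two_mul]
  omega

lemma code_inj_aux {s t : ℕ → Bool} {n m : ℕ} (h : code s n = code t m) :
    n = m ∧ ∀ i, i < n → s i = t i := by
  have hp : Nat.pair n (Encodable.encode (List.ofFn fun i : Fin n => s i)) =
      Nat.pair m (Encodable.encode (List.ofFn fun i : Fin m => t i)) := by
    unfold code at h; omega
  obtain ⟨hnm, henc⟩ := Nat.pair_eq_pair.mp hp
  subst hnm
  have hl := Encodable.encode_injective henc
  have hf := List.ofFn_injective hl
  refine ⟨rfl, fun i hi => ?_⟩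
  exact congrFun hf ⟨i, hi⟩

lemma code_left_inj (s : ℕ → Bool) : Function.Injective (code s) := by
  intro n m h
  exact (code_inj_aux h).1

/-! ### The generators and the subgroups -/

variable (p : ℕ)

/-- the generator supported on the `r`-th pair block. -/
def fgen (r : ℕ) : ℕ → ZMod p := fun i => if i = uu r ∨ i = vv r then 1 else 0

/-- Dirac delta at `j`. -/
def dgen (j : ℕ) : ℕ → ZMod p := fun i => if i = j then 1 else 0

/-- indicator of the set of codes of prefixes of `s` (supported on odds). -/
def ygen (s : ℕ → Bool) : ℕ → ZMod p := fun i => if ∃ n, i = code s n then 1 else 0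

/-- the subgroup associated to a set `S` of binary sequences. -/
def HH (S : Set (ℕ → Bool)) : AddSubgroup (ℕ → ZMod p) :=
  AddSubgroup.closure
    (Set.range (fgen p) ∪ dgen p '' {j | Odd j} ∪ ygen p '' S)

lemma fgen_mem (S : Set (ℕ → Bool)) (r : ℕ) : fgen p r ∈ HH p S :=
  AddSubgroup.subset_closure (Or.inl (Or.inl ⟨r, rfl⟩))

lemma dgen_mem (S : Set (ℕ → Bool)) {j : ℕ} (hj : Odd j) : dgen p j ∈ HH p S :=
  AddSubgroup.subset_closure (Or.inl (Or.inr ⟨j, hj, rfl⟩))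

lemma ygen_mem (S : Set (ℕ → Bool)) {s : ℕ → Bool} (hs : s ∈ S) : ygen p s ∈ HH p S :=
  AddSubgroup.subset_closure (Or.inr ⟨s, hs, rfl⟩)

lemma ygen_odd_vanish (s : ℕ → Bool) {i : ℕ} (hi : ¬ Odd i) : ygen p s i = 0 := by
  unfold ygen
  rw [if_neg]
  rintro ⟨n, rfl⟩
  exact hi (odd_code s n)

/-- Every finitely supported function vanishing on even coordinates is in `HH p S`. -/
lemma mem_of_oddSupported [NeZero p] (S : Set (ℕ → Bool)) (N : ℕ) :
    ∀ g : ℕ → ZMod p, (∀ i, ¬ Odd i → g i = 0) → (∀ i, N ≤ i → g i = 0) →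
      g ∈ HH p S := by
  induction N with
  | zero =>
    intro g _ hbd
    have : g = 0 := funext fun i => hbd i (Nat.zero_le i)
    rw [this]; exact zero_mem _
  | succ N ih =>
    intro g hodd hbd
    by_cases hN : g N = 0
    · exact ih g hodd (fun i hi => by
        rcases Nat.eq_or_lt_of_le hi with h | h
        · rw [← h]; exact hN
        · exact hbd i h)
    · have hNodd : Odd N := by
        by_contra h
        exact hN (hodd N h)
      have hsplit : g = (fun i => if i = N then 0 else g i) +
          ((g N).val • dgen p N) := by
        have hcast : (((g N).val : ℕ) : ZMod p) = g N := by
          rw [ZMod.natCast_val, ZMod.cast_id]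
        funext i
        by_cases h : i = N
        · subst h
          simp only [dgen, Pi.add_apply, Pi.smul_apply, if_true, zero_add]
          rw [nsmul_eq_mul, mul_one, ZMod.natCast_val, ZMod.cast_id]
        · simp [dgen, h, Pi.smul_apply, nsmul_eq_mul]
      rw [hsplit]
      refine add_mem (ih _ (fun i hi => ?_) (fun i hi => ?_))
        (AddSubgroup.nsmul_mem _ (dgen_mem p S hNodd) _)
      · by_cases h : i = N
        · simp [h]
        · simp [h, hodd i hi]
      · by_cases h : i = N
        · simp [h]
        · have : N + 1 ≤ i := by omega
          simp [h, hbd i this]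

/-! ### Uniform controllability -/

lemma uc [NeZero p] (S : Set (ℕ → Bool)) : UniformlyControllable (HH p S) := by
  intro J hJ
  refine ⟨J ∪ vv '' (uu ⁻¹' J) ∪ uu '' (vv ⁻¹' J), ?_, ?_⟩
  · exact ((hJ.union ((hJ.preimage uu_inj.injOn).image vv)).union
      ((hJ.preimage vv_inj.injOn).image uu))
  · set K : Set ℕ := J ∪ vv '' (uu ⁻¹' J) ∪ uu '' (vv ⁻¹' J) with hK
    have hJK : J ⊆ K := fun j hj => Or.inl (Or.inl hj)
    obtain ⟨N, hN⟩ := hJ.bddAbove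
    apply Set.Subset.antisymm
    · rintro _ ⟨h, hh, rfl⟩
      have key : ∃ g ∈ HH p S, (∀ n ∉ K, g n = 0) ∧ ∀ j ∈ J, g j = h j := by
        -- auxiliary fact for odd-supported generators
        have trunc : ∀ h0 : ℕ → ZMod p, (∀ i, ¬ Odd i → h0 i = 0) →
            ∃ g ∈ HH p S, (∀ n ∉ K, g n = 0) ∧ ∀ j ∈ J, g j = h0 j := by
          intro h0 hh0
          refine ⟨fun i => if i ∈ J then h0 i else 0, ?_, fun n hn => ?_, fun j hj => ?_⟩
          · apply mem_of_oddSupported p S (N + 1)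
            · intro i hi
              by_cases h' : i ∈ J
              · simp [h', hh0 i hi]
              · simp [h']
            · intro i hi
              have : i ∉ J := fun h' => by have := hN h'; omega
              simp [this]
          · have : n ∉ J := fun h' => hn (hJK h')
            simp [this]
          · simp [hj]
        refine AddSubgroup.closure_induction
          (p := fun h _ => ∃ g ∈ HH p S, (∀ n ∉ K, g n = 0) ∧ ∀ j ∈ J, g j = h j)
          ?_ ?_ ?_ ?_ hh
        · rintro x (⟨⟨r, rfl⟩ | ⟨j, hj, rfl⟩⟩ | ⟨s, hs, rfl⟩)
          · by_cases hc : uu r ∈ J ∨ vv r ∈ J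
            · refine ⟨fgen p r, fgen_mem p S r, fun n hn => ?_, fun j _ => rfl⟩
              unfold fgen
              rw [if_neg]
              rintro (rfl | rfl)
              · rcases hc with hc | hc
                · exact hn (hJK hc)
                · exact hn (Or.inr ⟨r, hc, rfl⟩)
              · rcases hc with hc | hc
                · exact hn (Or.inl (Or.inr ⟨r, hc, rfl⟩))
                · exact hn (hJK hc)
            · push_neg at hc
              refine ⟨0, zero_mem _, fun n _ => rfl, fun j hj => ?_⟩
              have h1 : j ≠ uu r := fun h => hc.1 (h ▸ hj)
              have h2 : j ≠ vv r := fun h => hc.2 (h ▸ hj)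
              simp [fgen, h1, h2]
          · refine trunc _ (fun i hi => ?_)
            unfold dgen
            rw [if_neg]
            rintro rfl
            exact hi hj
          · exact trunc _ (fun i hi => ygen_odd_vanish p s hi)
        · exact ⟨0, zero_mem _, fun n _ => rfl, fun j _ => rfl⟩
        · rintro x y hx hy ⟨g1, hg1, hg1s, hg1j⟩ ⟨g2, hg2, hg2s, hg2j⟩
          refine ⟨g1 + g2, add_mem hg1 hg2, fun n hn => ?_, fun j hj => ?_⟩
          · simp [hg1s n hn, hg2s n hn]
          · simp [hg1j j hj, hg2j j hj]
        · rintro x hx ⟨g, hg, hgs, hgj⟩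
          refine ⟨-g, neg_mem hg, fun n hn => ?_, fun j hj => ?_⟩
          · simp [hgs n hn]
          · simp [hgj j hj]
      obtain ⟨g, hg, hgs, hgj⟩ := key
      exact ⟨g, ⟨hg, hgs⟩, funext fun j => hgj j j.2⟩
    · exact Set.image_mono Set.inter_subset_left

/-! ### Failure of strong controllability -/

lemma apply_uu_eq_apply_vv (S : Set (ℕ → Bool)) {g : ℕ → ZMod p}
    (hg : g ∈ HH p S) (r : ℕ) : g (uu r) = g (vv r) := by
  refine AddSubgroup.closure_induction
    (p := fun g _ => g (uu r) = g (vv r)) ?_ rfl ?_ ?_ hg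
  · rintro x (⟨⟨t, rfl⟩ | ⟨j, hj, rfl⟩⟩ | ⟨s, hs, rfl⟩)
    · by_cases hrt : r = t
      · subst hrt; simp [fgen]
      · have h1 : uu r ≠ uu t := fun h => hrt (uu_inj h)
        have h2 : uu r ≠ vv t := uu_ne_vv r t
        have h3 : vv r ≠ uu t := Ne.symm (uu_ne_vv t r)
        have h4 : vv r ≠ vv t := fun h => hrt (vv_inj h)
        simp [fgen, h1, h2, h3, h4]
    · have h1 : uu r ≠ j := fun h => not_odd_uu r (h ▸ hj)
      have h2 : vv r ≠ j := fun h => not_odd_vv r (h ▸ hj)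
      simp [dgen, h1, h2]
    · rw [ygen_odd_vanish p s (not_odd_uu r), ygen_odd_vanish p s (not_odd_vv r)]
  · intro x y _ _ hx hy
    simp [Pi.add_apply, hx, hy]
  · intro x _ hx
    simp [Pi.neg_apply, hx]

lemma nsc [Fact (1 < p)] (S : Set (ℕ → Bool)) : ¬ StronglyControllable (HH p S) := by
  rintro ⟨k, hk⟩
  obtain ⟨g, hg, h1, h2⟩ := hk (fgen p k) (fgen_mem p S k) 0 (zero_mem _) (uu k)
  have e1 : g (uu k) = 1 := by
    rw [h1 (uu k) le_rfl]
    simp [fgen]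
  have e2 : g (vv k) = 0 := by
    have : uu k + k ≤ vv k := le_of_lt (uu_add_lt_vv k)
    exact h2 (vv k) this
  have : (1 : ZMod p) = 0 := by
    rw [← e1, apply_uu_eq_apply_vv p S hg k, e2]
  exact one_ne_zero this

/-! ### Injectivity: recovering `S` from `HH p S` -/

/-- Every element of `HH p S` agrees, off a finite set, with a finite linear
combination of the `ygen`s of elements of `S`. -/
lemma rep (S : Set (ℕ → Bool)) {g : ℕ → ZMod p} (hg : g ∈ HH p S) :
    ∃ c : (ℕ → Bool) →₀ ZMod p, ↑c.support ⊆ S ∧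
      {i | g i ≠ Finsupp.linearCombination (ZMod p) (ygen p) c i}.Finite := by
  refine AddSubgroup.closure_induction
    (p := fun g _ => ∃ c : (ℕ → Bool) →₀ ZMod p, ↑c.support ⊆ S ∧
      {i | g i ≠ Finsupp.linearCombination (ZMod p) (ygen p) c i}.Finite) ?_ ?_ ?_ ?_ hg
  · rintro x (⟨⟨r, rfl⟩ | ⟨j, hj, rfl⟩⟩ | ⟨s, hs, rfl⟩)
    · refine ⟨0, by simp, ?_⟩
      apply Set.Finite.subset (Set.Finite.insert (uu r) (Set.finite_singleton (vv r)))
      intro i hi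
      simp only [Set.mem_setOf_eq, map_zero, Pi.zero_apply] at hi
      simp only [Set.mem_insert_iff, Set.mem_singleton_iff]
      by_contra hmem
      push_neg at hmem
      exact hi (by simp [fgen, hmem.1, hmem.2])
    · refine ⟨0, by simp, ?_⟩
      apply Set.Finite.subset (Set.finite_singleton j)
      intro i hi
      simp only [Set.mem_setOf_eq, map_zero, Pi.zero_apply] at hi
      simp only [Set.mem_singleton_iff]
      by_contra hne
      exact hi (by simp [dgen, hne])
    · refine ⟨Finsupp.single s 1, ?_, ?_⟩
      · intro t ht
        have := Finsupp.support_single_subset ht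
        simp only [Finset.mem_singleton] at this
        rw [this]; exact hs
      · have : Finsupp.linearCombination (ZMod p) (ygen p) (Finsupp.single s 1) =
            ygen p s := by
          rw [Finsupp.linearCombination_single, one_smul]
        rw [this]
        simp
  · exact ⟨0, by simp, by simp⟩
  · rintro x y _ _ ⟨c1, hc1, hf1⟩ ⟨c2, hc2, hf2⟩
    refine ⟨c1 + c2, ?_, ?_⟩
    · intro t ht
      rcases Finset.mem_union.mp (Finsupp.support_add ht) with h | h
      · exact hc1 h
      · exact hc2 h
    · apply Set.Finite.subset (hf1.union hf2)
      intro i hi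
      simp only [Set.mem_setOf_eq, map_add, Pi.add_apply] at hi
      by_contra hmem
      simp only [Set.mem_union, Set.mem_setOf_eq] at hmem
      push_neg at hmem
      exact hi (by rw [hmem.1, hmem.2])
  · rintro x _ ⟨c, hc, hf⟩
    refine ⟨-c, ?_, ?_⟩
    · intro t ht
      rw [Finsupp.support_neg] at ht
      exact hc ht
    · apply Set.Finite.subset hf
      intro i hi
      simp only [Set.mem_setOf_eq, map_neg, Pi.neg_apply] at hi
      by_contra hmem
      simp only [Set.mem_setOf_eq] at hmem
      push_neg at hmem
      exact hi (by rw [hmem])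

/-- linear independence of the `ygen`s modulo finitely supported functions. -/
lemma indep (c : (ℕ → Bool) →₀ ZMod p)
    (h : {i | Finsupp.linearCombination (ZMod p) (ygen p) c i ≠ 0}.Finite) :
    c = 0 := by
  by_contra hc
  obtain ⟨s₀, hs₀⟩ := Finsupp.support_nonempty_iff.mpr hc
  -- the bad set of indices n
  have hfin1 : {n : ℕ | code s₀ n ∈
      {i | Finsupp.linearCombination (ZMod p) (ygen p) c i ≠ 0}}.Finite :=
    h.preimage (code_left_inj s₀).injOn
  have hfin2 : ∀ t ∈ c.support, {n : ℕ | t ≠ s₀ ∧ ∃ m, code s₀ n = code t m}.Finite := by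
    intro t _
    by_cases hts : t = s₀
    · apply Set.Finite.subset (Set.finite_empty)
      rintro n ⟨hne, _⟩
      exact hne hts
    · obtain ⟨M, hM⟩ := Function.ne_iff.mp (fun h => hts (h.symm))
      apply Set.Finite.subset (Set.finite_Iic M)
      rintro n ⟨_, m, hm⟩
      obtain ⟨hm1, hm2⟩ := code_inj_aux hm
      subst hm1
      by_contra hn
      simp only [Set.mem_Iic, not_le] at hn
      exact hM (hm2 M hn)
  have hBad : ({n : ℕ | code s₀ n ∈
      {i | Finsupp.linearCombination (ZMod p) (ygen p) c i ≠ 0}} ∪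
      ⋃ t ∈ c.support, {n : ℕ | t ≠ s₀ ∧ ∃ m, code s₀ n = code t m}).Finite :=
    hfin1.union (Set.Finite.biUnion (c.support.finite_toSet) hfin2)
  obtain ⟨n, hn⟩ := hBad.infinite_compl.nonempty
  simp only [Set.mem_compl_iff, Set.mem_union, Set.mem_iUnion, not_or, not_exists] at hn
  obtain ⟨hn1, hn2⟩ := hn
  -- evaluate the linear combination at `code s₀ n`
  have heval : Finsupp.linearCombination (ZMod p) (ygen p) c (code s₀ n) = c s₀ := by
    rw [Finsupp.linearCombination_apply, Finsupp.sum_apply', Finsupp.sum]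
    rw [Finset.sum_eq_single s₀]
    · have : ygen p s₀ (code s₀ n) = 1 := by
        unfold ygen
        rw [if_pos ⟨n, rfl⟩]
      rw [Pi.smul_apply, this, smul_eq_mul, mul_one]
    · intro t ht hts
      have hy : ygen p t (code s₀ n) = 0 := by
        unfold ygen
        rw [if_neg]
        rintro ⟨m, hm⟩
        exact hn2 t ht ⟨hts, m, hm⟩
      rw [Pi.smul_apply, hy, smul_eq_mul, mul_zero]
    · intro hns
      rw [Finsupp.notMem_support_iff.mp hns, zero_smul, Pi.zero_apply]
  have hz : Finsupp.linearCombination (ZMod p) (ygen p) c (code s₀ n) = 0 := by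
    by_contra hne
    exact hn1 hne
  rw [heval] at hz
  exact Finsupp.mem_support_iff.mp hs₀ hz

lemma mem_ygen_iff [Fact (1 < p)] (S : Set (ℕ → Bool)) (s₀ : ℕ → Bool) :
    ygen p s₀ ∈ HH p S ↔ s₀ ∈ S := by
  constructor
  · intro hmem
    by_contra hs₀S
    obtain ⟨c, hsupp, hfin⟩ := rep p S hmem
    have hc0 : c s₀ = 0 := by
      by_contra h
      exact hs₀S (hsupp (Finsupp.mem_support_iff.mpr h))
    set c' : (ℕ → Bool) →₀ ZMod p := Finsupp.single s₀ 1 - c with hc'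
    have hfin' : {i | Finsupp.linearCombination (ZMod p) (ygen p) c' i ≠ 0}.Finite := by
      apply Set.Finite.subset hfin
      intro i hi
      simp only [Set.mem_setOf_eq] at hi ⊢
      intro heq
      apply hi
      rw [hc', map_sub, Finsupp.linearCombination_single, one_smul, Pi.sub_apply, heq,
        sub_eq_zero]
    have := indep p c' hfin'
    have h1 : c' s₀ = 1 := by
      rw [hc', Finsupp.sub_apply, Finsupp.single_eq_same, hc0, sub_zero]
    rw [this] at h1
    simp only [Finsupp.coe_zero, Pi.zero_apply] at h1
    exact one_ne_zero h1.symm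
  · exact ygen_mem p S

lemma HH_injective [Fact (1 < p)] : Function.Injective (HH p) := by
  intro S T h
  ext s
  rw [← mem_ygen_iff p S s, ← mem_ygen_iff p T s, h]

/-! ### Cardinality computations -/

lemma mk_fun_zmod (hp : p.Prime) : Cardinal.mk (ℕ → ZMod p) = Cardinal.continuum := by
  haveI : Fact p.Prime := ⟨hp⟩
  haveI : NeZero p := ⟨hp.ne_zero⟩
  have h1 : Cardinal.mk (ℕ → ZMod p) = (p : Cardinal) ^ Cardinal.aleph0 := by
    rw [Cardinal.mk_arrow, Cardinal.mk_nat, Cardinal.mk_fintype, ZMod.card]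
    simp
  rw [h1]
  apply le_antisymm
  · calc (p : Cardinal) ^ Cardinal.aleph0
        ≤ Cardinal.continuum ^ Cardinal.aleph0 := by
          apply Cardinal.power_le_power_right
          exact le_of_lt (Cardinal.nat_lt_continuum p)
    _ = Cardinal.continuum := Cardinal.continuum_power_aleph0
  · calc Cardinal.continuum = 2 ^ Cardinal.aleph0 := Cardinal.two_power_aleph0.symm
    _ ≤ (p : Cardinal) ^ Cardinal.aleph0 := by
        apply Cardinal.power_le_power_right
        exact_mod_cast Nat.cast_le.mpr hp.two_le

lemma mk_fun_bool : Cardinal.mk (ℕ → Bool) = Cardinal.continuum := by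
  rw [Cardinal.mk_arrow, Cardinal.mk_nat, Cardinal.mk_bool]
  simp [Cardinal.two_power_aleph0]

end UCAux

end

theorem card_uniformlyControllable_not_stronglyControllable_zmod
    (p : ℕ) (hp : p.Prime) :
    Cardinal.mk {H : AddSubgroup (ℕ → ZMod p) |
        UniformlyControllable H ∧ ¬ StronglyControllable H} =
      2 ^ Cardinal.continuum := by
  haveI : Fact p.Prime := ⟨hp⟩
  haveI : Fact (1 < p) := ⟨hp.one_lt⟩
  haveI : NeZero p := ⟨hp.ne_zero⟩
  apply le_antisymm
  · calc Cardinal.mk {H : AddSubgroup (ℕ → ZMod p) |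
        UniformlyControllable H ∧ ¬ StronglyControllable H}
        ≤ Cardinal.mk (AddSubgroup (ℕ → ZMod p)) := Cardinal.mk_set_le _
    _ ≤ Cardinal.mk (Set (ℕ → ZMod p)) :=
        Cardinal.mk_le_of_injective (f := fun H => (H : Set (ℕ → ZMod p)))
          SetLike.coe_injective
    _ = 2 ^ Cardinal.mk (ℕ → ZMod p) := Cardinal.mk_set
    _ = 2 ^ Cardinal.continuum := by rw [UCAux.mk_fun_zmod p hp]
  · have hinj : Function.Injective
        (fun S : Set (ℕ → Bool) =>
          (⟨UCAux.HH p S, UCAux.uc p S, UCAux.nsc p S⟩ :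
            {H : AddSubgroup (ℕ → ZMod p) |
              UniformlyControllable H ∧ ¬ StronglyControllable H})) := by
      intro S T h
      exact UCAux.HH_injective p (congrArg Subtype.val h)
    calc (2 : Cardinal) ^ Cardinal.continuum
        = 2 ^ Cardinal.mk (ℕ → Bool) := by rw [UCAux.mk_fun_bool]
    _ = Cardinal.mk (Set (ℕ → Bool)) := Cardinal.mk_set.symm
    _ ≤ Cardinal.mk {H : AddSubgroup (ℕ → ZMod p) |
          UniformlyControllable H ∧ ¬ StronglyControllable H} :=
        Cardinal.mk_le_of_injective hinj
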